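/- Let p ≥ 1 be an integer, let c > 0, and let (d_k)_{k≥0} be a sequence of positive reals with d_k ≥ c·(k+1)^{1/p} for all k. Then there exists a constant K such that for all s ∈ (0,1]: ∑_{k=0}^∞ exp(−(s·d_k)^{p+1}) ≤ K·s^{−p} and ∑_{k=0}^∞ d_k^{−p−1}·(1 − exp(−(s·d_k)^{p+1})) ≤ K·s. -/

import Mathlib

lemma pow_sub_pow_le_aux (p : ℕ) {x y : ℝ} (hy : 0 ≤ y) (hxy : y ≤ x) :
    x ^ p - y ^ p ≤ p * x ^ (p - 1) * (x - y) := by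
  have hx : 0 ≤ x := hy.trans hxy
  rw [← geom_sum₂_mul x y p]
  apply mul_le_mul_of_nonneg_right _ (sub_nonneg.2 hxy)
  calc ∑ i ∈ Finset.range p, x ^ i * y ^ (p - 1 - i)
      ≤ ∑ i ∈ Finset.range p, x ^ (p - 1) := by
        apply Finset.sum_le_sum
        intro i hi
        simp only [Finset.mem_range] at hi
        calc x ^ i * y ^ (p - 1 - i) ≤ x ^ i * x ^ (p - 1 - i) := by
              apply mul_le_mul_of_nonneg_left (pow_le_pow_left₀ hy hxy _) (pow_nonneg hx _)
          _ = x ^ (p - 1) := by rw [← pow_add]; congr 1; omega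
    _ = p * x ^ (p - 1) := by rw [Finset.sum_const, Finset.card_range, nsmul_eq_mul]

lemma teleC (p : ℕ) (hp : 1 ≤ p) {a : ℝ} (ha : 1 ≤ a) :
    ((a + 1) * (a + 1) ^ ((1 : ℝ) / p))⁻¹ ≤
      p * (a ^ (-(1 : ℝ) / p) - (a + 1) ^ (-(1 : ℝ) / p)) := by
  have hp0 : (0:ℝ) < p := by exact_mod_cast hp
  have hpne : (p:ℝ) ≠ 0 := ne_of_gt hp0
  have ha0 : (0:ℝ) < a := by linarith
  have hb0 : (0:ℝ) < a + 1 := by linarith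
  set x := a ^ (-(1 : ℝ) / p) with hxdef
  set y := (a + 1) ^ (-(1 : ℝ) / p) with hydef
  have hx0 : 0 < x := Real.rpow_pos_of_pos ha0 _
  have hy0 : 0 < y := Real.rpow_pos_of_pos hb0 _
  have hexp : -(1:ℝ)/p ≤ 0 := by
    apply div_nonpos_of_nonpos_of_nonneg <;> linarith
  have hyx : y ≤ x := Real.rpow_le_rpow_of_nonpos ha0 (by linarith) hexp
  have hxp : x ^ p = a⁻¹ := by
    rw [hxdef, ← Real.rpow_natCast (a ^ (-(1:ℝ)/p)) p, ← Real.rpow_mul ha0.le]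
    rw [show -(1:ℝ)/p * p = -1 by field_simp, Real.rpow_neg_one]
  have hyp : y ^ p = (a + 1)⁻¹ := by
    rw [hydef, ← Real.rpow_natCast ((a+1) ^ (-(1:ℝ)/p)) p, ← Real.rpow_mul hb0.le]
    rw [show -(1:ℝ)/p * p = -1 by field_simp, Real.rpow_neg_one]
  have hB := pow_sub_pow_le_aux p hy0.le hyx
  rw [hxp, hyp] at hB
  have hxp1 : 0 < x ^ (p - 1) := pow_pos hx0 _
  have hax : a * x ^ (p - 1) = a ^ ((1:ℝ)/p) := by
    have h1 : x ^ (p - 1) = a ^ (-(1:ℝ)/p * ((p:ℝ) - 1)) := by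
      rw [hxdef, ← Real.rpow_natCast (a ^ (-(1:ℝ)/p)) (p-1), ← Real.rpow_mul ha0.le]
      congr 1
      rw [Nat.cast_sub hp, Nat.cast_one]
    rw [h1]
    calc a * a ^ (-(1:ℝ)/p * ((p:ℝ) - 1))
        = a ^ ((1:ℝ) + -(1:ℝ)/p * ((p:ℝ) - 1)) := by
          rw [Real.rpow_add ha0, Real.rpow_one]
      _ = a ^ ((1:ℝ)/p) := by congr 1; field_simp; ring
  have hineq : a * (a+1) * x ^ (p-1) ≤ (a+1) * (a+1) ^ ((1:ℝ)/p) := by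
    have h2 : a ^ ((1:ℝ)/p) ≤ (a+1) ^ ((1:ℝ)/p) :=
      Real.rpow_le_rpow ha0.le (by linarith) (by positivity)
    calc a * (a+1) * x ^ (p-1) = (a+1) * (a * x ^ (p-1)) := by ring
      _ = (a+1) * a ^ ((1:ℝ)/p) := by rw [hax]
      _ ≤ (a+1) * (a+1) ^ ((1:ℝ)/p) := mul_le_mul_of_nonneg_left h2 hb0.le
  have hpos1 : 0 < a * (a+1) * x ^ (p-1) := by positivity
  have hBinv : a⁻¹ - (a+1)⁻¹ = (a * (a+1))⁻¹ := by
    field_simp; ring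
  rw [hBinv] at hB
  calc ((a + 1) * (a + 1) ^ ((1 : ℝ) / p))⁻¹
      ≤ (a * (a+1) * x ^ (p-1))⁻¹ := inv_anti₀ hpos1 hineq
    _ ≤ p * (x - y) := by
        rw [show a * (a+1) * x ^ (p-1) = (a * (a+1)) * x ^ (p-1) by ring, mul_inv,
          ← div_eq_mul_inv, div_le_iff₀ hxp1]
        nlinarith

lemma geomA (w : ℝ) (hw : 0 < w) (n : ℕ) :
    ∑ k ∈ Finset.range n, Real.exp (-w) ^ (k + 1) ≤ w⁻¹ := by
  set r := Real.exp (-w) with hr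
  have hr0 : 0 < r := Real.exp_pos _
  have hr1 : r < 1 := by
    rw [hr, show (1:ℝ) = Real.exp 0 by simp]
    exact Real.exp_lt_exp.2 (by linarith)
  have hkey : r * (w + 1) ≤ 1 := by
    have h1 : r * Real.exp w = 1 := by rw [hr, ← Real.exp_add]; simp
    have h2 := Real.add_one_le_exp w
    nlinarith
  have hsum : ∑ k ∈ Finset.range n, r ^ (k + 1) = r * ∑ k ∈ Finset.range n, r ^ k := by
    rw [Finset.mul_sum]; exact Finset.sum_congr rfl fun k _ => pow_succ' r k
  have hgeom : ∑ k ∈ Finset.range n, r ^ k ≤ (1 - r)⁻¹ := by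
    rw [geom_sum_eq (ne_of_lt hr1)]
    have h1r : (0:ℝ) < 1 - r := by linarith
    rw [div_le_iff_of_neg (by linarith : r - 1 < 0)]
    have hrn : 0 ≤ r ^ n := pow_nonneg hr0.le n
    have heq : (1 - r)⁻¹ * (r - 1) = -1 := by
      rw [show r - 1 = -(1 - r) by ring, mul_neg, inv_mul_cancel₀ (ne_of_gt h1r)]
    linarith
  rw [hsum]
  calc r * ∑ k ∈ Finset.range n, r ^ k ≤ r * (1 - r)⁻¹ :=
        mul_le_mul_of_nonneg_left hgeom hr0.le
    _ ≤ w⁻¹ := by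
        rw [← div_eq_mul_inv, div_le_iff₀ (by linarith), inv_mul_eq_div, le_div_iff₀ hw]
        nlinarith

/-- If `d_k ≥ c (k+1)^{1/p}` (the eigenvalue form of `D^{-p} ∈ L_{1,∞}`),
then for `f(t) = exp(−|t|^{p+1})` one has `∑_k f(s d_k) = O(s^{-p})` and
`∑_k d_k^{−p−1} (1 − f(s d_k)) = O(s)` uniformly for `s ∈ (0,1]`. -/
theorem stmt8 (p : ℕ) (hp : 1 ≤ p) (c : ℝ) (hc : 0 < c) (d : ℕ → ℝ)
    (hd0 : ∀ k, 0 < d k)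
    (hd : ∀ k : ℕ, c * ((k : ℝ) + 1) ^ ((1 : ℝ) / p) ≤ d k) :
    ∃ K : ℝ, ∀ s : ℝ, 0 < s → s ≤ 1 →
      (∑' k : ℕ, Real.exp (-((s * d k) ^ (p + 1)))) ≤ K * s ^ (-(p : ℝ)) ∧
      (∑' k : ℕ, (d k ^ (p + 1))⁻¹ * (1 - Real.exp (-((s * d k) ^ (p + 1))))) ≤ K * s := by
  have hp0 : (0:ℝ) < p := by exact_mod_cast hp
  have hpne : (p:ℝ) ≠ 0 := ne_of_gt hp0
  have hcp : (0:ℝ) < c ^ p := pow_pos hc p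
  have hcp1 : (0:ℝ) < c ^ (p+1) := pow_pos hc _
  -- the exponent identity used in both parts
  have hApow : ∀ k : ℕ, (((k:ℝ) + 1) ^ ((1:ℝ)/p)) ^ (p + 1)
      = ((k:ℝ) + 1) * ((k:ℝ) + 1) ^ ((1:ℝ)/p) := by
    intro k
    have hk0 : (0:ℝ) < (k:ℝ) + 1 := by positivity
    rw [← Real.rpow_natCast (((k:ℝ) + 1) ^ ((1:ℝ)/p)) (p+1), ← Real.rpow_mul hk0.le]
    push_cast
    rw [show (1:ℝ)/p * ((p:ℝ)+1) = 1 + 1/p by field_simp,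
      Real.rpow_add hk0, Real.rpow_one]
  refine ⟨(2 + c ^ p) / c ^ p + (2 + p / c ^ (p+1)), ?_⟩
  intro s hs hs1
  have hsp : (0:ℝ) < s ^ p := pow_pos hs p
  have hspinv : (1:ℝ) ≤ (s ^ p)⁻¹ := by
    rw [le_inv_comm₀ one_pos hsp]
    simpa using pow_le_one₀ hs.le hs1
  set t := s * c with htdef
  have ht : 0 < t := mul_pos hs hc
  have htp : 0 < t ^ p := pow_pos ht p
  constructor
  · -- first sum
    set N := ⌈(t ^ p)⁻¹⌉₊ with hNdef
    set r := Real.exp (-(t ^ p)) with hrdef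
    have hterm : ∀ k : ℕ, Real.exp (-((s * d k) ^ (p + 1)))
        ≤ (if k < N then (1:ℝ) else 0) + r ^ (k + 1) := by
      intro k
      by_cases hk : k < N
      · simp only [hk, if_true]
        have h1 : Real.exp (-((s * d k) ^ (p + 1))) ≤ 1 := by
          have hnn : (0:ℝ) ≤ (s * d k) ^ (p + 1) := pow_nonneg (mul_nonneg hs.le (hd0 k).le) _
          have : Real.exp (-((s * d k) ^ (p + 1))) ≤ Real.exp 0 :=
            Real.exp_le_exp.2 (by linarith)
          simpa using this
        have h2 : (0:ℝ) ≤ r ^ (k+1) := pow_nonneg (Real.exp_pos _).le _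
        linarith
      · simp only [hk, if_false, zero_add]
        push_neg at hk
        set A := ((k:ℝ) + 1) ^ ((1:ℝ)/p) with hAdef
        have hA0 : (0:ℝ) ≤ A := Real.rpow_nonneg (by positivity) _
        have h1 : t * A ≤ s * d k := by
          have := mul_le_mul_of_nonneg_left (hd k) hs.le
          calc t * A = s * (c * A) := by rw [htdef]; ring
            _ ≤ s * d k := this
        have h3 : (t * A) ^ (p+1) ≤ (s * d k) ^ (p+1) :=
          pow_le_pow_left₀ (by positivity) h1 _
        have hNk : ((t ^ p)⁻¹ : ℝ) ≤ (k:ℝ) + 1 := by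
          refine le_trans (Nat.le_ceil _) ?_
          have : (N:ℝ) ≤ (k:ℝ) := by exact_mod_cast hk
          linarith
        have hAinv : t⁻¹ ≤ A := by
          calc t⁻¹ = t ^ (-(1:ℝ)) := (Real.rpow_neg_one t).symm
            _ = (t ^ (-(p:ℝ))) ^ ((1:ℝ)/p) := by
                rw [← Real.rpow_mul ht.le]; congr 1; field_simp
            _ = ((t ^ p)⁻¹) ^ ((1:ℝ)/p) := by
                rw [Real.rpow_neg ht.le, Real.rpow_natCast]
            _ ≤ A := Real.rpow_le_rpow (by positivity) hNk (by positivity)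
        have hkey : t ^ p * ((k:ℝ) + 1) ≤ (s * d k) ^ (p + 1) := by
          have h4 : (t * A) ^ (p+1) = t ^ (p+1) * (((k:ℝ)+1) * A) := by
            rw [mul_pow, hAdef, hApow k]
          have h5 : t ^ (p+1) * (((k:ℝ)+1) * t⁻¹) ≤ t ^ (p+1) * (((k:ℝ)+1) * A) := by
            apply mul_le_mul_of_nonneg_left _ (by positivity)
            exact mul_le_mul_of_nonneg_left hAinv (by positivity)
          have h6 : t ^ (p+1) * (((k:ℝ)+1) * t⁻¹) = t ^ p * ((k:ℝ) + 1) := by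
            rw [pow_succ]; field_simp
          calc t ^ p * ((k:ℝ) + 1) = t ^ (p+1) * (((k:ℝ)+1) * t⁻¹) := h6.symm
            _ ≤ t ^ (p+1) * (((k:ℝ)+1) * A) := h5
            _ = (t * A) ^ (p+1) := h4.symm
            _ ≤ (s * d k) ^ (p + 1) := h3
        calc Real.exp (-((s * d k) ^ (p + 1)))
            ≤ Real.exp (-(t ^ p * ((k:ℝ) + 1))) := Real.exp_le_exp.2 (by linarith)
          _ = r ^ (k+1) := by
              rw [hrdef, ← Real.exp_nat_mul]
              congr 1
              push_cast
              ring
    have hsum : ∀ n : ℕ, ∑ k ∈ Finset.range n, Real.exp (-((s * d k) ^ (p + 1)))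
        ≤ 2 * (t ^ p)⁻¹ + 1 := by
      intro n
      calc ∑ k ∈ Finset.range n, Real.exp (-((s * d k) ^ (p + 1)))
          ≤ ∑ k ∈ Finset.range n, ((if k < N then (1:ℝ) else 0) + r ^ (k + 1)) :=
            Finset.sum_le_sum fun k _ => hterm k
        _ = (∑ k ∈ Finset.range n, (if k < N then (1:ℝ) else 0))
            + ∑ k ∈ Finset.range n, r ^ (k + 1) := Finset.sum_add_distrib
        _ ≤ (N : ℝ) + (t ^ p)⁻¹ := by
            apply add_le_add
            · rw [Finset.sum_boole]
              have hsub : (Finset.range n).filter (fun k => k < N) ⊆ Finset.range N := by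
                intro x hx
                simp only [Finset.mem_filter, Finset.mem_range] at hx ⊢
                exact hx.2
              have := Finset.card_le_card hsub
              rw [Finset.card_range] at this
              exact_mod_cast this
            · exact geomA (t ^ p) htp n
        _ ≤ 2 * (t ^ p)⁻¹ + 1 := by
            have := (Nat.ceil_lt_add_one (le_of_lt (inv_pos.2 htp))).le
            have h0 : (0:ℝ) ≤ (t ^ p)⁻¹ := (inv_pos.2 htp).le
            rw [hNdef]
            linarith
    have hnn : ∀ k : ℕ, (0:ℝ) ≤ Real.exp (-((s * d k) ^ (p + 1))) :=
      fun k => (Real.exp_pos _).le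
    have hts := Summable.tsum_le_of_sum_range_le (summable_of_sum_range_le hnn hsum) hsum
    refine le_trans hts ?_
    -- arithmetic: 2 (t^p)⁻¹ + 1 ≤ K s^{-p}
    have hrw : s ^ (-(p:ℝ)) = (s ^ p)⁻¹ := by
      rw [Real.rpow_neg hs.le, Real.rpow_natCast]
    rw [hrw]
    have e1 : (t ^ p)⁻¹ = (s ^ p)⁻¹ * (c ^ p)⁻¹ := by
      rw [htdef, mul_pow, mul_inv]
    have step : 2 * (t ^ p)⁻¹ + 1 ≤ (2 + c ^ p) / c ^ p * (s ^ p)⁻¹ := by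
      rw [e1, div_mul_eq_mul_div, le_div_iff₀ hcp]
      have hcc : (c ^ p)⁻¹ * c ^ p = 1 := inv_mul_cancel₀ (ne_of_gt hcp)
      nlinarith [hspinv, hcp]
    refine le_trans step ?_
    have : (0:ℝ) ≤ (2 + (p:ℝ) / c ^ (p+1)) * (s ^ p)⁻¹ := by positivity
    nlinarith
  · -- second sum
    set M := ⌈(s ^ p)⁻¹⌉₊ with hMdef
    have hM1 : 1 ≤ M := by
      rw [hMdef, Nat.one_le_iff_ne_zero, ← Nat.pos_iff_ne_zero, Nat.ceil_pos]
      exact inv_pos.2 hsp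
    set g : ℕ → ℝ := fun k => (k:ℝ) ^ (-(1:ℝ)/p) with hgdef
    have hterm : ∀ k : ℕ, (d k ^ (p+1))⁻¹ * (1 - Real.exp (-((s * d k) ^ (p + 1))))
        ≤ (if k < M then s ^ (p+1) else (p / c ^ (p+1)) * (g k - g (k+1))) := by
      intro k
      have hX0 : (0:ℝ) ≤ (s * d k) ^ (p+1) := pow_nonneg (mul_nonneg hs.le (hd0 k).le) _
      have hdk : (0:ℝ) < d k ^ (p+1) := pow_pos (hd0 k) _
      by_cases hk : k < M
      · simp only [hk, if_true]
        have h1e : 1 - Real.exp (-((s * d k) ^ (p + 1))) ≤ (s * d k) ^ (p + 1) := by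
          have := Real.add_one_le_exp (-((s * d k) ^ (p + 1)))
          linarith
        calc (d k ^ (p+1))⁻¹ * (1 - Real.exp (-((s * d k) ^ (p + 1))))
            ≤ (d k ^ (p+1))⁻¹ * (s * d k) ^ (p + 1) :=
              mul_le_mul_of_nonneg_left h1e (inv_nonneg.2 hdk.le)
          _ = s ^ (p+1) := by
              rw [mul_pow, mul_comm (s ^ (p+1)), ← mul_assoc,
                inv_mul_cancel₀ (ne_of_gt hdk), one_mul]
      · simp only [hk, if_false]
        push_neg at hk
        have hk1 : 1 ≤ k := le_trans hM1 hk
        have hka : (1:ℝ) ≤ (k:ℝ) := by exact_mod_cast hk1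
        set A := ((k:ℝ) + 1) ^ ((1:ℝ)/p) with hAdef
        have hA0 : (0:ℝ) < A := Real.rpow_pos_of_pos (by positivity) _
        have hdlow : c ^ (p+1) * (((k:ℝ)+1) * A) ≤ d k ^ (p+1) := by
          have h1 : (c * A) ^ (p+1) ≤ d k ^ (p+1) :=
            pow_le_pow_left₀ (by positivity) (hd k) _
          calc c ^ (p+1) * (((k:ℝ)+1) * A) = (c * A) ^ (p+1) := by
                rw [mul_pow, hAdef, hApow k]
            _ ≤ d k ^ (p+1) := h1
        have h1e : 1 - Real.exp (-((s * d k) ^ (p + 1))) ≤ 1 := by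
          have := (Real.exp_pos (-((s * d k) ^ (p + 1)))).le
          linarith
        have htele := teleC p hp hka
        have hgk : g (k+1) = ((k:ℝ) + 1) ^ (-(1:ℝ)/p) := by
          rw [hgdef]; push_cast; ring_nf
        calc (d k ^ (p+1))⁻¹ * (1 - Real.exp (-((s * d k) ^ (p + 1))))
            ≤ (d k ^ (p+1))⁻¹ * 1 :=
              mul_le_mul_of_nonneg_left h1e (inv_nonneg.2 hdk.le)
          _ = (d k ^ (p+1))⁻¹ := mul_one _
          _ ≤ (c ^ (p+1) * (((k:ℝ)+1) * A))⁻¹ := by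
              apply inv_anti₀ (by positivity) hdlow
          _ = (c ^ (p+1))⁻¹ * ((((k:ℝ)+1) * A))⁻¹ := mul_inv _ _
          _ ≤ (c ^ (p+1))⁻¹ * ((p:ℝ) * (g k - g (k+1))) := by
              apply mul_le_mul_of_nonneg_left _ (by positivity)
              rw [hgk, hgdef]
              exact htele
          _ = (p / c ^ (p+1)) * (g k - g (k+1)) := by ring
    have hsum : ∀ n : ℕ,
        ∑ k ∈ Finset.range n, (d k ^ (p+1))⁻¹ * (1 - Real.exp (-((s * d k) ^ (p + 1))))
        ≤ 2 * s + (p / c ^ (p+1)) * s := by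
      intro n
      have hfil1 : (Finset.range n).filter (fun k => k < M) = Finset.range (min n M) := by
        ext x; simp <;> omega
      have hfil2 : (Finset.range n).filter (fun k => ¬ k < M) = Finset.Ico M n := by
        ext x; simp <;> omega
      calc ∑ k ∈ Finset.range n, (d k ^ (p+1))⁻¹ * (1 - Real.exp (-((s * d k) ^ (p + 1))))
          ≤ ∑ k ∈ Finset.range n,
            (if k < M then s ^ (p+1) else (p / c ^ (p+1)) * (g k - g (k+1))) :=
            Finset.sum_le_sum fun k _ => hterm k
        _ = ∑ k ∈ (Finset.range n).filter (fun k => k < M), s ^ (p+1)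
            + ∑ k ∈ (Finset.range n).filter (fun k => ¬ k < M),
              (p / c ^ (p+1)) * (g k - g (k+1)) := Finset.sum_ite _ _
        _ ≤ (M:ℝ) * s ^ (p+1) + (p / c ^ (p+1)) * g M := by
            apply add_le_add
            · rw [hfil1, Finset.sum_const, Finset.card_range, nsmul_eq_mul]
              apply mul_le_mul_of_nonneg_right _ (by positivity)
              exact_mod_cast Nat.cast_le.2 (min_le_right n M)
            · rw [hfil2, ← Finset.mul_sum]
              apply mul_le_mul_of_nonneg_left _ (by positivity)
              rw [Finset.sum_Ico_eq_sum_range]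
              calc ∑ i ∈ Finset.range (n - M), (g (M + i) - g (M + i + 1))
                  = g M - g (M + (n - M)) := by
                    have := Finset.sum_range_sub' (fun i => g (M + i)) (n - M)
                    simpa [add_assoc] using this
                _ ≤ g M := by
                    have : (0:ℝ) ≤ g (M + (n - M)) :=
                      Real.rpow_nonneg (by positivity) _
                    linarith
        _ ≤ 2 * s + (p / c ^ (p+1)) * s := by
            apply add_le_add
            · -- M * s^{p+1} ≤ 2 s
              have hMle : (M:ℝ) ≤ (s ^ p)⁻¹ + 1 :=
                (Nat.ceil_lt_add_one (by positivity)).le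
              have h1 : (s ^ p)⁻¹ * s ^ (p+1) = s := by
                rw [pow_succ, ← mul_assoc, inv_mul_cancel₀ (ne_of_gt hsp), one_mul]
              have h2 : s ^ (p+1) ≤ s := by
                calc s ^ (p+1) = s ^ p * s := pow_succ s p
                  _ ≤ 1 * s := mul_le_mul_of_nonneg_right (pow_le_one₀ hs.le hs1) hs.le
                  _ = s := one_mul s
              have h3 : (0:ℝ) ≤ s ^ (p+1) := by positivity
              calc (M:ℝ) * s ^ (p+1) ≤ ((s ^ p)⁻¹ + 1) * s ^ (p+1) :=
                    mul_le_mul_of_nonneg_right hMle h3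
                _ = (s ^ p)⁻¹ * s ^ (p+1) + s ^ (p+1) := by ring
                _ ≤ 2 * s := by rw [h1]; linarith
            · -- g M ≤ s
              apply mul_le_mul_of_nonneg_left _ (by positivity)
              have hMg : (s ^ p)⁻¹ ≤ (M:ℝ) := Nat.le_ceil _
              have hexp : -(1:ℝ)/p ≤ 0 := by
                apply div_nonpos_of_nonpos_of_nonneg <;> linarith
              calc g M = ((M:ℝ)) ^ (-(1:ℝ)/p) := rfl
                _ ≤ ((s ^ p)⁻¹) ^ (-(1:ℝ)/p) :=
                    Real.rpow_le_rpow_of_nonpos (by positivity) hMg hexp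
                _ = s := by
                    rw [← Real.rpow_natCast s p, ← Real.rpow_neg hs.le,
                      ← Real.rpow_mul hs.le]
                    rw [show -(p:ℝ) * (-(1:ℝ)/p) = 1 by field_simp, Real.rpow_one]
    have hnn : ∀ k : ℕ,
        (0:ℝ) ≤ (d k ^ (p+1))⁻¹ * (1 - Real.exp (-((s * d k) ^ (p + 1)))) := by
      intro k
      have h1 : Real.exp (-((s * d k) ^ (p + 1))) ≤ 1 := by
        have hnn : (0:ℝ) ≤ (s * d k) ^ (p + 1) := pow_nonneg (mul_nonneg hs.le (hd0 k).le) _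
        have : Real.exp (-((s * d k) ^ (p + 1))) ≤ Real.exp 0 :=
          Real.exp_le_exp.2 (by linarith)
        simpa using this
      have h2 : (0:ℝ) ≤ (d k ^ (p+1))⁻¹ := inv_nonneg.2 (pow_pos (hd0 k) _).le
      nlinarith
    have hts := Summable.tsum_le_of_sum_range_le (summable_of_sum_range_le hnn hsum) hsum
    refine le_trans hts ?_
    have : (0:ℝ) ≤ (2 + c ^ p) / c ^ p * s := by positivity
    nlinarith
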